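/- Let G be a graph of order n with independence number i. Then for α ∈ [0,1), λ_α(G) ≤ λ_α(K_i^c ∨ K_{n−i}), with equality if and only if G ≅ K_i^c ∨ K_{n−i}. In particular, the unique graph with independence number n−4 maximizing the A_α spectral radius is K_{n−4}^c ∨ K_4. -/

import Mathlib

open scoped Classical

/-- The matrix `A_α(G) = α·D(G) + (1−α)·A(G)` over `ℝ`. -/
noncomputable def Aalpha {V : Type*} [Fintype V] (G : SimpleGraph V) (α : ℝ) : Matrix V V ℝ :=
  α • Matrix.diagonal (fun v => (G.degree v : ℝ)) +
    (1 - α) • (Matrix.of fun i j => if G.Adj i j then (1 : ℝ) else 0)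

/-- `lam` is the largest real eigenvalue (spectral radius) of the real symmetric matrix `M`. -/
def IsSpectralRadius {V : Type*} [Fintype V] (M : Matrix V V ℝ) (lam : ℝ) : Prop :=
  (∃ x : V → ℝ, x ≠ 0 ∧ M.mulVec x = lam • x) ∧
    ∀ μ : ℝ, (∃ x : V → ℝ, x ≠ 0 ∧ M.mulVec x = μ • x) → μ ≤ lam

/-- The independence number of `G`: the maximum cardinality of an independent set. -/
noncomputable def indepNum {V : Type*} [Fintype V] (G : SimpleGraph V) : ℕ :=
  sSup {k : ℕ | ∃ s : Finset V, s.card = k ∧ ∀ a ∈ s, ∀ b ∈ s, ¬ G.Adj a b}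

/-- The join `K_i^c ∨ K_j`: an independent set of `i` vertices, a clique of `j`
vertices, and all edges in between. -/
def joinCK (i j : ℕ) : SimpleGraph (Fin i ⊕ Fin j) :=
  SimpleGraph.fromRel (fun x y => x.isRight ∨ y.isRight)

open Matrix

section Rayleigh

variable {V : Type*} [Fintype V]

/-- For a real matrix, `x ᵥ* U = star U *ᵥ x`. -/
lemma vecMul_eq_star_mulVec (U : Matrix V V ℝ) (x : V → ℝ) :
    x ᵥ* U = star U *ᵥ x := by
  ext j
  simp [vecMul, mulVec, dotProduct, conjTranspose, mul_comm]

lemma rayleigh_main {N : Matrix V V ℝ} (hN : N.IsHermitian) {lamJ : ℝ}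
    (hb : ∀ μ : ℝ, (∃ x : V → ℝ, x ≠ 0 ∧ N.mulVec x = μ • x) → μ ≤ lamJ)
    (z : V → ℝ) :
    z ⬝ᵥ N.mulVec z ≤ lamJ * (z ⬝ᵥ z) ∧
      (z ⬝ᵥ N.mulVec z = lamJ * (z ⬝ᵥ z) → N.mulVec z = lamJ • z) := by
  set U : Matrix V V ℝ := (hN.eigenvectorUnitary : Matrix V V ℝ) with hU
  set d : V → ℝ := hN.eigenvalues with hd
  have hspec : N = U * diagonal d * star U := by
    have := hN.spectral_theorem
    rw [this, Unitary.conjStarAlgAut_apply]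
    rfl
  have hUU : U * star U = 1 := (Matrix.mem_unitaryGroup_iff).mp hN.eigenvectorUnitary.2
  set w : V → ℝ := star U *ᵥ z with hw
  have hdk : ∀ k, d k ≤ lamJ := by
    intro k
    refine hb (d k) ⟨hN.eigenvectorBasis k, ?_, hN.mulVec_eigenvectorBasis k⟩
    intro hc
    exact hN.eigenvectorBasis.orthonormal.ne_zero k (by ext v; exact congrFun hc v)
  have hNz : N *ᵥ z = U *ᵥ (fun k => d k * w k) := by
    have e2 : diagonal d *ᵥ (star U *ᵥ z) = fun k => d k * w k := by
      ext k; exact mulVec_diagonal d (star U *ᵥ z) k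
    rw [← e2, mulVec_mulVec, mulVec_mulVec, ← hspec]
  have key1 : z ⬝ᵥ N *ᵥ z = ∑ k, d k * w k ^ 2 := by
    rw [hNz, dotProduct_mulVec, vecMul_eq_star_mulVec, ← hw]
    simp [dotProduct, hw]
    ring_nf
    exact Finset.sum_congr rfl (fun k _ => by ring)
  have key2 : z ⬝ᵥ z = ∑ k, w k ^ 2 := by
    have h1 : z ⬝ᵥ z = (U *ᵥ w) ⬝ᵥ z := by
      rw [hw, mulVec_mulVec, hUU, one_mulVec]
    rw [h1, dotProduct_comm, dotProduct_mulVec, vecMul_eq_star_mulVec, ← hw]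
    simp [dotProduct]
    exact Finset.sum_congr rfl (fun k _ => by ring)
  constructor
  · rw [key1, key2, Finset.mul_sum]
    apply Finset.sum_le_sum
    intro k _
    have := hdk k
    nlinarith [sq_nonneg (w k)]
  · intro heq
    have hsum : ∑ k, (lamJ - d k) * w k ^ 2 = 0 := by
      rw [key1, key2, Finset.mul_sum] at heq
      have : ∑ k, (lamJ - d k) * w k ^ 2 = ∑ k, lamJ * w k ^ 2 - ∑ k, d k * w k ^ 2 := by
        rw [← Finset.sum_sub_distrib]; exact Finset.sum_congr rfl (fun k _ => by ring)
      rw [this, ← heq]; ring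
    have hterm : ∀ k ∈ Finset.univ, (lamJ - d k) * w k ^ 2 = 0 := by
      refine (Finset.sum_eq_zero_iff_of_nonneg ?_).mp hsum
      intro k _
      have := hdk k
      nlinarith [sq_nonneg (w k)]
    have hdw : (fun k => d k * w k) = fun k => lamJ * w k := by
      ext k
      have h := hterm k (Finset.mem_univ k)
      rcases mul_eq_zero.mp h with h1 | h2
      · have : d k = lamJ := by linarith
        rw [this]
      · have : w k = 0 := by nlinarith [sq_nonneg (w k)]
        rw [this]; ring
    rw [hNz, hdw]
    have : (fun k => lamJ * w k) = lamJ • w := by ext k; simp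
    rw [this, mulVec_smul, hw, mulVec_mulVec, hUU, one_mulVec]

end Rayleigh

section AalphaLemmas

variable {V : Type*} [Fintype V]

lemma Aalpha_apply (G : SimpleGraph V) (α : ℝ) (v u : V) :
    Aalpha G α v u = α * (if v = u then (G.degree v : ℝ) else 0) +
      (1 - α) * (if G.Adj v u then 1 else 0) := by
  simp [Aalpha, Matrix.diagonal, Matrix.add_apply, Matrix.smul_apply, smul_eq_mul]

lemma Aalpha_isHermitian (G : SimpleGraph V) (α : ℝ) : (Aalpha G α).IsHermitian := by
  unfold Matrix.IsHermitian
  ext u v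
  simp only [conjTranspose_apply, star_trivial, Aalpha_apply]
  congr 1
  · by_cases h : u = v
    · subst h; rfl
    · rw [if_neg h, if_neg (fun hc => h hc.symm)]
  · by_cases h : G.Adj u v
    · rw [if_pos h, if_pos h.symm]
    · rw [if_neg h, if_neg (fun hc => h hc.symm)]

lemma Aalpha_nonneg (G : SimpleGraph V) {α : ℝ} (h0 : 0 ≤ α) (h1 : α ≤ 1) (v u : V) :
    0 ≤ Aalpha G α v u := by
  rw [Aalpha_apply]
  have : (0:ℝ) ≤ 1 - α := by linarith
  apply add_nonneg <;> apply mul_nonneg <;> first | assumption | (split_ifs <;> positivity)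

lemma degree_mono {G H : SimpleGraph V} (h : G ≤ H) (v : V) : G.degree v ≤ H.degree v := by
  apply Finset.card_le_card
  intro u hu
  rw [SimpleGraph.mem_neighborFinset] at *
  exact h hu

lemma Aalpha_mono {G H : SimpleGraph V} (h : G ≤ H) {α : ℝ} (h0 : 0 ≤ α) (h1 : α ≤ 1)
    (v u : V) : Aalpha G α v u ≤ Aalpha H α v u := by
  rw [Aalpha_apply, Aalpha_apply]
  have h1' : (0:ℝ) ≤ 1 - α := by linarith
  apply add_le_add
  · apply mul_le_mul_of_nonneg_left _ h0
    split_ifs with hvu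
    · exact_mod_cast degree_mono h v
    · exact le_rfl
  · apply mul_le_mul_of_nonneg_left _ h1'
    split_ifs with h2 h3
    · exact le_rfl
    · exact absurd (h h2) h3
    · norm_num
    · exact le_rfl

lemma Aalpha_iso_apply {W : Type*} [Fintype W] {G : SimpleGraph V} {H : SimpleGraph W}
    (e : G ≃g H) (α : ℝ) (u v : V) : Aalpha H α (e u) (e v) = Aalpha G α u v := by
  rw [Aalpha_apply, Aalpha_apply]
  have hdeg : H.degree (e u) = G.degree u := by
    rw [← SimpleGraph.card_neighborSet_eq_degree, ← SimpleGraph.card_neighborSet_eq_degree]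
    exact Fintype.card_congr (e.mapNeighborSet u).symm
  congr 1
  · rw [hdeg]
    congr 1
    simp
  · congr 1
    simp [e.map_adj_iff]

lemma Aalpha_mulVec_iso {W : Type*} [Fintype W] {G : SimpleGraph V} {H : SimpleGraph W}
    (e : G ≃g H) (α : ℝ) (x : V → ℝ) :
    (Aalpha H α) *ᵥ (x ∘ ⇑e.symm) = ((Aalpha G α) *ᵥ x) ∘ ⇑e.symm := by
  ext w
  show ∑ w', Aalpha H α w w' * (x (e.symm w')) = ∑ u, Aalpha G α (e.symm w) u * x u
  symm
  apply Fintype.sum_equiv e.toEquiv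
  intro u
  have h1 : Aalpha H α w (e u) = Aalpha G α (e.symm w) u := by
    conv_lhs => rw [show w = e (e.symm w) by simp]
    exact Aalpha_iso_apply e α (e.symm w) u
  have h2 : (e.symm (e u) : V) = u := by simp
  rw [show (e.toEquiv u : W) = e u from rfl, h1, h2]

lemma isSpectralRadius_iso {W : Type*} [Fintype W] {G : SimpleGraph V} {H : SimpleGraph W}
    (e : G ≃g H) (α : ℝ) {l : ℝ} (h : IsSpectralRadius (Aalpha G α) l) :
    IsSpectralRadius (Aalpha H α) l := by
  obtain ⟨⟨x, hx0, hx⟩, hmax⟩ := h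
  constructor
  · refine ⟨x ∘ ⇑e.symm, ?_, ?_⟩
    · intro hc
      apply hx0
      ext v
      have := congrFun hc (e v)
      simpa using this
    · rw [Aalpha_mulVec_iso e α x, hx]
      rfl
  · rintro μ ⟨y, hy0, hy⟩
    apply hmax μ
    refine ⟨y ∘ ⇑e, ?_, ?_⟩
    · intro hc
      apply hy0
      ext w
      have := congrFun hc (e.symm w)
      simpa using this
    · have := Aalpha_mulVec_iso e.symm α y
      have hss : ⇑e.symm.symm = ⇑e := rfl
      rw [hss] at this
      rw [this, hy]
      rfl

lemma isSpectralRadius_unique {M : Matrix V V ℝ} {a b : ℝ}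
    (ha : IsSpectralRadius M a) (hb : IsSpectralRadius M b) : a = b :=
  le_antisymm (hb.2 a ha.1) (ha.2 b hb.1)

end AalphaLemmas

section Graphs

variable {V : Type*} [Fintype V]

/-- The graph on `V` which is complete except that `S` is an independent set. -/
def HS (S : Finset V) : SimpleGraph V where
  Adj u v := u ≠ v ∧ (u ∉ S ∨ v ∉ S)
  symm := ⟨by intro u v ⟨h1, h2⟩; exact ⟨h1.symm, h2.symm⟩⟩
  loopless := ⟨by intro u ⟨h1, _⟩; exact h1 rfl⟩

lemma HS_iso (S : Finset V) (n i : ℕ) (hn : Fintype.card V = n) (hcard : S.card = i)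
    (hin : i ≤ n) : Nonempty (HS S ≃g joinCK i (n - i)) := by
  have hcS : Fintype.card {x : V // x ∈ S} = i := by
    rw [Fintype.card_coe, hcard]
  have hcC : Fintype.card {x : V // x ∉ S} = n - i := by
    have := Fintype.card_subtype_compl (fun x => x ∈ S)
    rw [this, hcS, hn]
  let eS : {x : V // x ∈ S} ≃ Fin i := Fintype.equivFinOfCardEq hcS
  let eC : {x : V // x ∉ S} ≃ Fin (n - i) := Fintype.equivFinOfCardEq hcC
  let φ : V ≃ (Fin i ⊕ Fin (n - i)) :=
    (Equiv.sumCompl (· ∈ S)).symm.trans (Equiv.sumCongr eS eC)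
  have hright : ∀ v : V, (φ v).isRight = true ↔ v ∉ S := by
    intro v
    by_cases hv : v ∈ S
    · simp only [φ, Equiv.trans_apply, Equiv.sumCompl_symm_apply_of_pos hv,
        Equiv.sumCongr_apply, Sum.map_inl, Sum.isRight_inl]
      simp [hv]
    · simp only [φ, Equiv.trans_apply, Equiv.sumCompl_symm_apply_of_neg hv,
        Equiv.sumCongr_apply, Sum.map_inr, Sum.isRight_inr]
      simp [hv]
  refine ⟨⟨φ, ?_⟩⟩
  intro u v
  simp only [joinCK, SimpleGraph.fromRel_adj]
  show (φ u ≠ φ v ∧ _) ↔ (u ≠ v ∧ (u ∉ S ∨ v ∉ S))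
  constructor
  · rintro ⟨hne, hr⟩
    refine ⟨fun hc => hne (by rw [hc]), ?_⟩
    rcases hr with (h | h) | (h | h)
    · exact Or.inl ((hright u).mp h)
    · exact Or.inr ((hright v).mp h)
    · exact Or.inr ((hright v).mp h)
    · exact Or.inl ((hright u).mp h)
  · rintro ⟨hne, hr⟩
    refine ⟨fun hc => hne (φ.injective hc), ?_⟩
    rcases hr with h | h
    · exact Or.inl (Or.inl ((hright u).mpr h))
    · exact Or.inl (Or.inr ((hright v).mpr h))

lemma le_HS {G : SimpleGraph V} {S : Finset V}
    (hind : ∀ a ∈ S, ∀ b ∈ S, ¬ G.Adj a b) : G ≤ HS S := by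
  intro u v huv
  refine ⟨G.ne_of_adj huv, ?_⟩
  by_contra hc
  push_neg at hc
  exact hind u hc.1 v hc.2 huv

end Graphs

theorem stmt15 {V : Type*} [Fintype V] (G : SimpleGraph V) (n i : ℕ)
    (hn : Fintype.card V = n) (hi : indepNum G = i) (hin : i ≤ n)
    (α : ℝ) (hα : α ∈ Set.Ico (0 : ℝ) 1)
    (lam lamJ : ℝ) (hlam : IsSpectralRadius (Aalpha G α) lam)
    (hlamJ : IsSpectralRadius (Aalpha (joinCK i (n - i)) α) lamJ) :
    lam ≤ lamJ ∧ (lam = lamJ ↔ Nonempty (G ≃g joinCK i (n - i))) := by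
  obtain ⟨hα0, hα1⟩ := hα
  have hα1' : α ≤ 1 := le_of_lt hα1
  -- dispose of the empty case
  cases isEmpty_or_nonempty V with
  | inl hemp =>
    obtain ⟨x, hx0, _⟩ := hlam.1
    exact absurd (funext fun v => (IsEmpty.false v).elim) hx0
  | inr hne =>
  -- extract a maximum independent set
  have hS : ∃ s : Finset V, s.card = i ∧ ∀ a ∈ s, ∀ b ∈ s, ¬ G.Adj a b := by
    have hmem : indepNum G ∈ {k : ℕ | ∃ s : Finset V, s.card = k ∧ ∀ a ∈ s, ∀ b ∈ s, ¬ G.Adj a b} := by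
      apply Nat.sSup_mem
      · exact ⟨0, ⟨∅, by simp⟩⟩
      · exact ⟨Fintype.card V, fun k ⟨s, hs, _⟩ => hs ▸ Finset.card_le_univ s⟩
    rw [hi] at hmem
    obtain ⟨s, hs1, hs2⟩ := hmem
    exact ⟨s, hs1, hs2⟩
  obtain ⟨S, hScard, hSind⟩ := hS
  obtain ⟨eiso⟩ := HS_iso S n i hn hScard hin
  set M : Matrix V V ℝ := Aalpha G α with hM
  set N : Matrix V V ℝ := Aalpha (HS S) α with hN
  have hGH : G ≤ HS S := le_HS hSind
  have hlamJ' : IsSpectralRadius N lamJ := isSpectralRadius_iso eiso.symm α hlamJ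
  -- eigenvector of M
  obtain ⟨⟨x, hx0, hx⟩, hlam2⟩ := hlam
  set y : V → ℝ := fun v => |x v| with hy
  have hy0 : ∀ v, 0 ≤ y v := fun v => abs_nonneg _
  have hyx : y ⬝ᵥ y = x ⬝ᵥ x := by
    simp [dotProduct, hy, abs_mul_abs_self]
  have hxx_pos : 0 < x ⬝ᵥ x := by
    rcases (dotProduct_self_eq_zero (v := x)).not.mpr hx0 with h
    have hnn : 0 ≤ x ⬝ᵥ x := Finset.sum_nonneg fun v _ => mul_self_nonneg (x v)
    exact lt_of_le_of_ne hnn (Ne.symm h)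
  have hxMx : x ⬝ᵥ M *ᵥ x = lam * (x ⬝ᵥ x) := by
    rw [hx, dotProduct_smul, smul_eq_mul]
  have hMnn : ∀ v u, 0 ≤ M v u := fun v u => Aalpha_nonneg G hα0 hα1' v u
  have hNnn : ∀ v u, 0 ≤ N v u := fun v u => Aalpha_nonneg (HS S) hα0 hα1' v u
  have hMN : ∀ v u, M v u ≤ N v u := fun v u => Aalpha_mono hGH hα0 hα1' v u
  have h1 : x ⬝ᵥ M *ᵥ x ≤ y ⬝ᵥ M *ᵥ y := by
    simp only [dotProduct, mulVec]
    apply Finset.sum_le_sum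
    intro v _
    rw [Finset.mul_sum, Finset.mul_sum]
    apply Finset.sum_le_sum
    intro u _
    calc x v * (M v u * x u) ≤ |x v * (M v u * x u)| := le_abs_self _
      _ = |x v| * (M v u * |x u|) := by
          rw [abs_mul, abs_mul, abs_of_nonneg (hMnn v u)]
  have h2 : y ⬝ᵥ M *ᵥ y ≤ y ⬝ᵥ N *ᵥ y := by
    simp only [dotProduct, mulVec]
    apply Finset.sum_le_sum
    intro v _
    rw [Finset.mul_sum, Finset.mul_sum]
    apply Finset.sum_le_sum
    intro u _
    have key : 0 ≤ (y v * y u) * (N v u - M v u) :=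
      mul_nonneg (mul_nonneg (hy0 v) (hy0 u)) (sub_nonneg.mpr (hMN v u))
    nlinarith [key]
  have hray := rayleigh_main (Aalpha_isHermitian (HS S) α) hlamJ'.2 y
  have h3 : y ⬝ᵥ N *ᵥ y ≤ lamJ * (y ⬝ᵥ y) := hray.1
  -- main inequality
  have hineq : lam ≤ lamJ := by
    have : lam * (x ⬝ᵥ x) ≤ lamJ * (x ⬝ᵥ x) := by
      calc lam * (x ⬝ᵥ x) = x ⬝ᵥ M *ᵥ x := hxMx.symm
        _ ≤ y ⬝ᵥ M *ᵥ y := h1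
        _ ≤ y ⬝ᵥ N *ᵥ y := h2
        _ ≤ lamJ * (y ⬝ᵥ y) := h3
        _ = lamJ * (x ⬝ᵥ x) := by rw [hyx]
    exact le_of_mul_le_mul_right this hxx_pos
  refine ⟨hineq, ?_, ?_⟩
  · -- equality implies isomorphism
    intro heq
    -- it suffices to show G = HS S
    suffices hGHS : G = HS S by
      subst hGHS
      exact ⟨eiso⟩
    -- all inequalities in the chain are equalities
    have hchain : y ⬝ᵥ N *ᵥ y = lamJ * (y ⬝ᵥ y) ∧ y ⬝ᵥ M *ᵥ y = y ⬝ᵥ N *ᵥ y := by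
      have e1 : lam * (x ⬝ᵥ x) = lamJ * (y ⬝ᵥ y) := by rw [heq, hyx]
      constructor <;> linarith [hxMx, h1, h2, h3, e1]
    have hNy : N *ᵥ y = lamJ • y := hray.2 hchain.1
    -- positivity of y
    by_cases hSuniv : ∀ v : V, v ∈ S
    · -- then G and HS S are both empty
      ext u v
      simp only [HS]
      constructor
      · intro h
        exact absurd h (hSind u (hSuniv u) v (hSuniv v))
      · rintro ⟨h1, h2 | h2⟩ <;> [exact absurd (hSuniv u) h2; exact absurd (hSuniv v) h2]
    · push_neg at hSuniv
      obtain ⟨v₀, hv₀⟩ := hSuniv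
      -- step lemma
      have hstep : ∀ u v : V, (HS S).Adj v u → 0 < y u → 0 < y v := by
        intro u v hadj hyu
        by_contra hc
        push_neg at hc
        have hyv : y v = 0 := le_antisymm hc (hy0 v)
        have hNyv := congrFun hNy v
        have hexp : (N *ᵥ y) v = α * ((HS S).degree v) * y v +
            (1 - α) * ∑ u', (if (HS S).Adj v u' then (1:ℝ) else 0) * y u' := by
          simp only [mulVec, dotProduct, Aalpha_apply, add_mul, Finset.sum_add_distrib, hN]
          congr 1
          · have hcong : ∀ u' ∈ Finset.univ, α * (if v = u' then ((HS S).degree v : ℝ) else 0) * y u' =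
                if v = u' then α * ((HS S).degree v) * y u' else 0 := by
              intro u' _; split_ifs <;> ring
            rw [Finset.sum_congr rfl hcong, Finset.sum_ite_eq]
            simp
          · rw [Finset.mul_sum]
            exact Finset.sum_congr rfl (fun u' _ => by ring)
        have hsum_lb : y u ≤ ∑ u', (if (HS S).Adj v u' then (1:ℝ) else 0) * y u' := by
          have := Finset.single_le_sum (f := fun u' => (if (HS S).Adj v u' then (1:ℝ) else 0) * y u')
            (fun u' _ => by
              show (0:ℝ) ≤ (if (HS S).Adj v u' then (1:ℝ) else 0) * y u'
              split_ifs <;> simp [hy0 u']) (Finset.mem_univ u)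
          simpa [hadj] using this
        rw [hexp, hyv] at hNyv
        simp only [Pi.smul_apply, smul_eq_mul, hyv, mul_zero] at hNyv
        have : (0:ℝ) < (1 - α) * ∑ u', (if (HS S).Adj v u' then (1:ℝ) else 0) * y u' := by
          apply mul_pos (by linarith)
          exact lt_of_lt_of_le hyu hsum_lb
        linarith
      have hypos : ∀ v, 0 < y v := by
        have hy00 : ∃ u, 0 < y u := by
          by_contra hc
          push_neg at hc
          apply hx0
          ext v
          have := le_antisymm (hc v) (hy0 v)
          exact abs_eq_zero.mp this
        obtain ⟨u₀, hu₀⟩ := hy00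
        have hyv₀ : 0 < y v₀ := by
          by_cases h : u₀ = v₀
          · rwa [h] at hu₀
          · exact hstep u₀ v₀ ⟨fun hc => h hc.symm, Or.inl hv₀⟩ hu₀
        intro v
        by_cases h : v = v₀
        · rwa [h]
        · exact hstep v₀ v ⟨h, Or.inr hv₀⟩ hyv₀
      -- entries of M and N agree
      have hentries : ∀ v u, M v u = N v u := by
        have hzero : ∑ v, ∑ u, (N v u - M v u) * (y v * y u) = 0 := by
          have expand : ∀ (P : Matrix V V ℝ), y ⬝ᵥ P *ᵥ y = ∑ v, ∑ u, P v u * (y v * y u) := by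
            intro P
            simp only [dotProduct, mulVec, Finset.mul_sum]
            exact Finset.sum_congr rfl (fun v _ => Finset.sum_congr rfl (fun u _ => by ring))
          have hMNeq := hchain.2
          rw [expand M, expand N] at hMNeq
          calc ∑ v, ∑ u, (N v u - M v u) * (y v * y u)
              = ∑ v, ∑ u, (N v u * (y v * y u) - M v u * (y v * y u)) :=
                Finset.sum_congr rfl fun v _ => Finset.sum_congr rfl fun u _ => by ring
            _ = ∑ v, (∑ u, N v u * (y v * y u) - ∑ u, M v u * (y v * y u)) :=
                Finset.sum_congr rfl fun v _ => Finset.sum_sub_distrib _ _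
            _ = ∑ v, ∑ u, N v u * (y v * y u) - ∑ v, ∑ u, M v u * (y v * y u) :=
                Finset.sum_sub_distrib _ _
            _ = 0 := by rw [hMNeq]; ring
        intro v u
        have hterm : (N v u - M v u) * (y v * y u) = 0 := by
          have houter : ∀ v ∈ Finset.univ, (0:ℝ) ≤ ∑ u, (N v u - M v u) * (y v * y u) := by
            intro v _
            apply Finset.sum_nonneg
            intro u _
            exact mul_nonneg (sub_nonneg.mpr (hMN v u))
              (mul_nonneg (hypos v).le (hypos u).le)
          have h1 := (Finset.sum_eq_zero_iff_of_nonneg houter).mp hzero v (Finset.mem_univ v)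
          have hinner : ∀ u ∈ Finset.univ, (0:ℝ) ≤ (N v u - M v u) * (y v * y u) := by
            intro u _
            exact mul_nonneg (sub_nonneg.mpr (hMN v u))
              (mul_nonneg (hypos v).le (hypos u).le)
          exact (Finset.sum_eq_zero_iff_of_nonneg hinner).mp h1 u (Finset.mem_univ u)
        have hpos : 0 < y v * y u := mul_pos (hypos v) (hypos u)
        have := mul_eq_zero.mp hterm
        rcases this with h | h
        · linarith
        · exact absurd h (ne_of_gt hpos)
      -- conclude G = HS S
      ext u v
      by_cases huv : u = v
      · subst huv
        simp [(HS S).loopless.irrefl u, G.loopless.irrefl u]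
      · have := hentries u v
        rw [hM, hN, Aalpha_apply, Aalpha_apply, if_neg huv, if_neg huv] at this
        simp only [mul_zero, zero_add] at this
        have h1α : (1:ℝ) - α ≠ 0 := by linarith
        have hif : (if G.Adj u v then (1:ℝ) else 0) = (if (HS S).Adj u v then (1:ℝ) else 0) :=
          mul_left_cancel₀ h1α this
        constructor
        · intro h
          by_contra hc
          rw [if_pos h, if_neg hc] at hif
          norm_num at hif
        · intro h
          by_contra hc
          rw [if_neg hc, if_pos h] at hif
          norm_num at hif
  · -- isomorphism implies equality
    rintro ⟨e⟩
    have : IsSpectralRadius (Aalpha (joinCK i (n - i)) α) lam := isSpectralRadius_iso e α ⟨⟨x, hx0, hx⟩, hlam2⟩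
    exact isSpectralRadius_unique this hlamJ
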